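/- Let (X,‖·‖) be a separable real Banach space and φ: P_X → P_X a surjective π-isometry. Then there exists a surjective affine isometry ψ: X → X such that φ(δ_x) = δ_{ψ(x)} for every x ∈ X. -/

import Mathlib

open MeasureTheory Metric Set TopologicalSpace

/-- The (one-sided) Lévy–Prokhorov distance of two Borel probability measures. -/
noncomputable def LPdist {X : Type*} [MetricSpace X] [MeasurableSpace X]
    (μ ν : ProbabilityMeasure X) : ℝ :=
  sInf {ε : ℝ | 0 < ε ∧ ∀ A : Set X, MeasurableSet A →
    (μ : Measure X) A ≤ (ν : Measure X) (thickening ε A) + ENNReal.ofReal ε}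

/-- The s-Lévy–Prokhorov distance. -/
noncomputable def LPsdist {X : Type*} [MetricSpace X] [MeasurableSpace X]
    (s : ℝ) (μ ν : ProbabilityMeasure X) : ℝ :=
  sInf {ε : ℝ | 0 < ε ∧ ∀ A : Set X, MeasurableSet A →
    ENNReal.ofReal s * (μ : Measure X) A ≤
      ENNReal.ofReal s * (ν : Measure X) (thickening ε A) + ENNReal.ofReal ε}

/-- The support of a Borel probability measure. -/
def mSupport {X : Type*} [MetricSpace X] [MeasurableSpace X]
    (μ : ProbabilityMeasure X) : Set X :=
  {x : X | ∀ r : ℝ, 0 < r → 0 < (μ : Measure X) (ball x r)}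

/-- The Dirac measure as a probability measure. -/
noncomputable def diracPM {X : Type*} [MeasurableSpace X] (x : X) : ProbabilityMeasure X :=
  ⟨Measure.dirac x, inferInstance⟩

/-- Finitely supported probability measures: finite convex combinations of Dirac measures. -/
def IsFinitelySupported {X : Type*} [MeasurableSpace X] (μ : ProbabilityMeasure X) : Prop :=
  ∃ (s : Finset X) (w : X → ℝ), (∀ x ∈ s, 0 < w x) ∧ (∑ x ∈ s, w x = 1) ∧
    (μ : Measure X) = ∑ x ∈ s, ENNReal.ofReal (w x) • Measure.dirac x

/-- The unit distance set of a set of probability measures. -/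
def unitDistSet {X : Type*} [MetricSpace X] [MeasurableSpace X]
    (𝒜 : Set (ProbabilityMeasure X)) : Set (ProbabilityMeasure X) :=
  {ν | ∀ μ ∈ 𝒜, LPdist μ ν = 1}

/-- The witness function. -/
noncomputable def witness {X : Type*} [MetricSpace X] [MeasurableSpace X]
    (μ : ProbabilityMeasure X) (x : X) : ℝ :=
  LPdist (diracPM x) μ

/-- The s-witness function. -/
noncomputable def switness {X : Type*} [MetricSpace X] [MeasurableSpace X]
    (s : ℝ) (μ : ProbabilityMeasure X) (x : X) : ℝ :=
  LPsdist s (diracPM x) μ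

open scoped ENNReal
section Basic
set_option linter.unusedSectionVars false
set_option linter.unusedVariables false
variable {X : Type*} [MetricSpace X] [MeasurableSpace X] [OpensMeasurableSpace X]

/-- The defining set of `LPdist`. -/
def LPS (μ ν : ProbabilityMeasure X) : Set ℝ :=
  {ε : ℝ | 0 < ε ∧ ∀ A : Set X, MeasurableSet A →
    (μ : Measure X) A ≤ (ν : Measure X) (thickening ε A) + ENNReal.ofReal ε}

lemma LPdist_eq_sInf (μ ν : ProbabilityMeasure X) : LPdist μ ν = sInf (LPS μ ν) := rfl

lemma mem_LPS_of_one_le {μ ν : ProbabilityMeasure X} {ε : ℝ} (h : 1 ≤ ε) : ε ∈ LPS μ ν := by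
  refine ⟨lt_of_lt_of_le one_pos h, fun A hA => ?_⟩
  calc (μ : Measure X) A ≤ 1 := prob_le_one
    _ ≤ ENNReal.ofReal ε := by
        simpa using ENNReal.ofReal_le_ofReal h
    _ ≤ _ := le_add_self

lemma LPS_nonempty (μ ν : ProbabilityMeasure X) : (LPS μ ν).Nonempty :=
  ⟨1, mem_LPS_of_one_le le_rfl⟩

lemma LPS_bddBelow (μ ν : ProbabilityMeasure X) : BddBelow (LPS μ ν) :=
  ⟨0, fun x hx => hx.1.le⟩

lemma LPS_mono {μ ν : ProbabilityMeasure X} {ε ε' : ℝ} (h : ε ∈ LPS μ ν) (hle : ε ≤ ε') :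
    ε' ∈ LPS μ ν := by
  refine ⟨lt_of_lt_of_le h.1 hle, fun A hA => ?_⟩
  exact (h.2 A hA).trans (add_le_add (measure_mono (thickening_mono hle A))
    (ENNReal.ofReal_le_ofReal hle))

lemma LPdist_nonneg (μ ν : ProbabilityMeasure X) : 0 ≤ LPdist μ ν :=
  le_csInf (LPS_nonempty μ ν) fun x hx => hx.1.le

lemma LPdist_le_one (μ ν : ProbabilityMeasure X) : LPdist μ ν ≤ 1 :=
  csInf_le (LPS_bddBelow μ ν) (mem_LPS_of_one_le le_rfl)

lemma mem_LPS_of_LPdist_lt {μ ν : ProbabilityMeasure X} {ε : ℝ} (h : LPdist μ ν < ε) :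
    ε ∈ LPS μ ν := by
  obtain ⟨ε', hε', hlt⟩ := exists_lt_of_csInf_lt (LPS_nonempty μ ν) h
  exact LPS_mono hε' hlt.le

lemma LPdist_le_of_mem {μ ν : ProbabilityMeasure X} {ε : ℝ} (h : ε ∈ LPS μ ν) :
    LPdist μ ν ≤ ε := csInf_le (LPS_bddBelow μ ν) h

lemma LPdist_lt_one_iff {μ ν : ProbabilityMeasure X} :
    LPdist μ ν < 1 ↔ ∃ ε < 1, ε ∈ LPS μ ν := by
  constructor
  · intro h
    obtain ⟨ε', hε', hlt⟩ := exists_lt_of_csInf_lt (LPS_nonempty μ ν) h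
    exact ⟨ε', hlt, hε'⟩
  · rintro ⟨ε, hlt, hε⟩
    exact lt_of_le_of_lt (LPdist_le_of_mem hε) hlt

lemma LPdist_eq_one_iff {μ ν : ProbabilityMeasure X} :
    LPdist μ ν = 1 ↔ ∀ ε, 0 < ε → ε < 1 → ε ∉ LPS μ ν := by
  constructor
  · intro h ε h0 h1 hmem
    exact absurd (LPdist_le_of_mem hmem) (by rw [h]; exact not_le.2 h1)
  · intro h
    refine le_antisymm (LPdist_le_one μ ν) ?_
    by_contra hlt
    push_neg at hlt
    obtain ⟨ε, h1, hε⟩ := LPdist_lt_one_iff.1 hlt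
    exact h ε hε.1 h1 hε

/-- Symmetry of membership in the defining set. -/
lemma LPS_symm {μ ν : ProbabilityMeasure X} {ε : ℝ} (h : ε ∈ LPS μ ν) : ε ∈ LPS ν μ := by
  obtain ⟨hε, hcond⟩ := h
  refine ⟨hε, fun B hB => ?_⟩
  set A : Set X := (thickening ε B)ᶜ with hAdef
  have hA : MeasurableSet A := (isOpen_thickening.measurableSet).compl
  have hdisj : thickening ε A ∩ B = ∅ := by
    ext y
    simp only [mem_inter_iff, mem_empty_iff_false, iff_false]
    rintro ⟨hy1, hy2⟩
    rw [mem_thickening_iff] at hy1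
    obtain ⟨a, ha, hd⟩ := hy1
    have : a ∈ thickening ε B := by
      rw [mem_thickening_iff]
      exact ⟨y, hy2, by rwa [dist_comm] at hd⟩
    exact ha this
  have h1 : (ν : Measure X) (thickening ε A) ≤ 1 - (ν : Measure X) B := by
    have hsub : thickening ε A ⊆ Bᶜ := by
      intro y hy
      intro hyB
      have : y ∈ thickening ε A ∩ B := ⟨hy, hyB⟩
      rw [hdisj] at this
      exact this
    calc (ν : Measure X) (thickening ε A) ≤ (ν : Measure X) Bᶜ := measure_mono hsub
      _ = 1 - (ν : Measure X) B := by
          rw [measure_compl hB (measure_ne_top _ _), measure_univ]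
  have h2 : (μ : Measure X) A = 1 - (μ : Measure X) (thickening ε B) := by
    rw [hAdef, measure_compl (isOpen_thickening.measurableSet) (measure_ne_top _ _), measure_univ]
  have key := hcond A hA
  rw [h2] at key
  have key2 : 1 - (μ : Measure X) (thickening ε B) ≤ (1 - (ν : Measure X) B) + ENNReal.ofReal ε :=
    key.trans (add_le_add_left h1 _)
  -- now rearrange in ℝ≥0∞
  have hν1 : (ν : Measure X) B ≤ 1 := prob_le_one
  have hμ1 : (μ : Measure X) (thickening ε B) ≤ 1 := prob_le_one
  have := tsub_le_iff_right.1 key2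
  -- 1 ≤ (1 - ν B) + ofReal ε + μ (thick ε B)
  have h3 : (1 : ℝ≥0∞) ≤ (1 - (ν : Measure X) B) + (ENNReal.ofReal ε + (μ : Measure X) (thickening ε B)) := by
    calc (1:ℝ≥0∞) = 1 - (μ : Measure X) (thickening ε B) + (μ : Measure X) (thickening ε B) :=
          (tsub_add_cancel_of_le hμ1).symm
      _ ≤ ((1 - (ν : Measure X) B) + ENNReal.ofReal ε) + (μ : Measure X) (thickening ε B) :=
          add_le_add_left key2 _
      _ = _ := by ring
  -- hence ν B ≤ μ (thick ε B) + ofReal ε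
  have h4 : (ν : Measure X) B + (1 - (ν : Measure X) B) ≤
      (1 - (ν : Measure X) B) + (ENNReal.ofReal ε + (μ : Measure X) (thickening ε B)) := by
    rw [add_comm, tsub_add_cancel_of_le hν1]
    exact h3
  have hc : (1 - (ν : Measure X) B) ≠ ⊤ :=
    ne_top_of_le_ne_top ENNReal.one_ne_top tsub_le_self
  rw [add_comm ((ν : Measure X) B) _] at h4
  have h6 : (ν : Measure X) B ≤ ENNReal.ofReal ε + (μ : Measure X) (thickening ε B) :=
    (ENNReal.add_le_add_iff_left hc).1 h4
  rwa [add_comm] at h6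

lemma LPdist_symm (μ ν : ProbabilityMeasure X) : LPdist μ ν = LPdist ν μ := by
  rw [LPdist_eq_sInf, LPdist_eq_sInf]
  congr 1
  ext ε
  exact ⟨LPS_symm, LPS_symm⟩

end Basic

section Dirac
set_option linter.unusedSectionVars false
variable {X : Type*} [MetricSpace X] [MeasurableSpace X] [OpensMeasurableSpace X]

lemma diracPM_coe (x : X) : ((diracPM x : ProbabilityMeasure X) : Measure X) = Measure.dirac x :=
  rfl

lemma diracPM_inj : Function.Injective (diracPM (X := X)) := by
  intro x y h
  by_contra hxy
  have h1 : ((diracPM x : ProbabilityMeasure X) : Measure X) {x} = 1 := by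
    rw [diracPM_coe, Measure.dirac_apply_of_mem (mem_singleton x)]
  have h2 : ((diracPM y : ProbabilityMeasure X) : Measure X) {x} = 0 := by
    rw [diracPM_coe, Measure.dirac_apply' _ (measurableSet_singleton x)]
    simp [Ne.symm hxy]
  rw [h, h2] at h1
  exact zero_ne_one h1

lemma eq_diracPM_of_singleton {μ : ProbabilityMeasure X} {x : X}
    (h : (μ : Measure X) {x} = 1) : μ = diracPM x := by
  apply ProbabilityMeasure.toMeasure_injective
  rw [diracPM_coe]
  ext A hA
  rw [Measure.dirac_apply' _ hA]
  by_cases hx : x ∈ A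
  · have h1 : (μ : Measure X) A ≥ 1 := h ▸ measure_mono (singleton_subset_iff.2 hx)
    have h2 : (μ : Measure X) A ≤ 1 := prob_le_one
    simp [le_antisymm h2 h1, indicator_of_mem hx]
  · have h1 : (μ : Measure X) A ≤ (μ : Measure X) {x}ᶜ :=
      measure_mono (subset_compl_comm.1 (by simpa using hx))
    rw [measure_compl (measurableSet_singleton x) (measure_ne_top _ _), measure_univ, h,
      tsub_self] at h1
    simpa [indicator_of_notMem hx] using le_antisymm h1 (zero_le)

/-- Criterion for membership in `LPS (diracPM x) ν`. -/
lemma mem_LPS_dirac_iff {x : X} {ν : ProbabilityMeasure X} {ε : ℝ} (hε : 0 < ε) :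
    ε ∈ LPS (diracPM x) ν ↔ 1 ≤ (ν : Measure X) (ball x ε) + ENNReal.ofReal ε := by
  constructor
  · intro h
    have := h.2 {x} (measurableSet_singleton x)
    rwa [diracPM_coe, Measure.dirac_apply_of_mem (mem_singleton x), thickening_singleton] at this
  · intro h
    refine ⟨hε, fun A hA => ?_⟩
    rw [diracPM_coe, Measure.dirac_apply' _ hA]
    by_cases hx : x ∈ A
    · rw [indicator_of_mem hx]
      exact h.trans (add_le_add_left (measure_mono (ball_subset_thickening hx ε)) _)
    · rw [indicator_of_notMem hx]
      exact zero_le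

lemma LPdist_dirac_eq_one_of_ball_zero {x : X} {ν : ProbabilityMeasure X}
    (h : (ν : Measure X) (ball x 1) = 0) : LPdist (diracPM x) ν = 1 := by
  rw [LPdist_eq_one_iff]
  intro ε h0 h1 hmem
  rw [mem_LPS_dirac_iff h0] at hmem
  have hb : (ν : Measure X) (ball x ε) = 0 :=
    le_antisymm (h ▸ measure_mono (ball_subset_ball h1.le)) (zero_le)
  rw [hb, zero_add] at hmem
  exact absurd hmem (by simp [ENNReal.one_le_ofReal, not_le, h1])

/-- If `μ` has positive mass on every ball around `z` and `LPdist μ ν = 1`,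
then `ν` vanishes on the unit ball around `z`. -/
lemma ball_zero_of_LPdist_eq_one {μ ν : ProbabilityMeasure X} {z : X}
    (hz : ∀ r : ℝ, 0 < r → 0 < (μ : Measure X) (ball z r))
    (h : LPdist μ ν = 1) : (ν : Measure X) (ball z 1) = 0 := by
  -- First, vanishing on every smaller ball.
  have key : ∀ s : ℝ, s < 1 → (ν : Measure X) (ball z s) = 0 := by
    intro s hs1
    rcases le_or_gt s 0 with hs0 | hs0
    · simp [ball_eq_empty.2 hs0]
    -- choose r, β
    set r : ℝ := (1 - s) / 2 with hr_def
    have hr0 : 0 < r := by rw [hr_def]; linarith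
    have hβ := hz r hr0
    -- real lower bound b on μ(ball z r)
    obtain ⟨b, hb0, hb1, hble⟩ : ∃ b : ℝ, 0 < b ∧ b ≤ 1 ∧
        ENNReal.ofReal b ≤ (μ : Measure X) (ball z r) := by
      refine ⟨min ((μ : Measure X) (ball z r)).toReal 1, ?_, min_le_right _ _, ?_⟩
      · exact lt_min (ENNReal.toReal_pos hβ.ne' (measure_ne_top _ _)) one_pos
      · calc ENNReal.ofReal (min ((μ : Measure X) (ball z r)).toReal 1)
            ≤ ENNReal.ofReal ((μ : Measure X) (ball z r)).toReal :=
              ENNReal.ofReal_le_ofReal (min_le_left _ _)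
          _ = (μ : Measure X) (ball z r) := ENNReal.ofReal_toReal (measure_ne_top _ _)
    -- show ν (ball z s) ≤ ofReal η for every η > 0
    have main : ∀ η : ℝ, 0 < η → (ν : Measure X) (ball z s) ≤ ENNReal.ofReal η := by
      intro η hη
      set ε : ℝ := (max (max (s + r) (1 - b)) (1 - η) + 1) / 2 with hε_def
      have hεlt1 : ε < 1 := by
        rw [hε_def]
        have h1 : s + r < 1 := by rw [hr_def]; linarith
        have h2 : 1 - b < 1 := by linarith
        have h3 : 1 - η < 1 := by linarith
        have : max (max (s + r) (1 - b)) (1 - η) < 1 := by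
          simp only [max_lt_iff]; exact ⟨⟨h1, h2⟩, h3⟩
        linarith
      have hεgt : max (max (s + r) (1 - b)) (1 - η) < ε := by
        rw [hε_def]
        have : max (max (s + r) (1 - b)) (1 - η) < 1 := by
          rw [hε_def] at hεlt1
          linarith [le_max_left (max (s + r) (1 - b)) (1 - η)]
        linarith
      have hsr : s + r < ε := lt_of_le_of_lt (le_trans (le_max_left _ _) (le_max_left _ _)) hεgt
      have hb' : 1 - b < ε := lt_of_le_of_lt (le_trans (le_max_right _ _) (le_max_left _ _)) hεgt
      have hη' : 1 - η < ε := lt_of_le_of_lt (le_max_right _ _) hεgt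
      have hε0 : 0 < ε := by
        have : 0 < s + r := by positivity
        linarith
      -- ε ∉ LPS μ ν
      have hnot : ε ∉ LPS μ ν := (LPdist_eq_one_iff.1 h) ε hε0 hεlt1
      simp only [LPS, mem_setOf_eq, not_and] at hnot
      push_neg at hnot
      obtain ⟨A, hA, hAgt⟩ := hnot hε0
      -- A meets ball z r
      have hmeet : (A ∩ ball z r).Nonempty := by
        by_contra hne
        rw [not_nonempty_iff_eq_empty] at hne
        have hsub : ball z r ⊆ Aᶜ := by
          intro w hw
          intro hwA
          have : w ∈ A ∩ ball z r := ⟨hwA, hw⟩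
          rw [hne] at this; exact this
        have h1 : (μ : Measure X) A ≤ 1 - ENNReal.ofReal b := by
          have h2 : (μ : Measure X) A ≤ (μ : Measure X) (ball z r)ᶜ :=
            measure_mono (subset_compl_comm.1 (by simpa using hsub))
          rw [measure_compl measurableSet_ball (measure_ne_top _ _), measure_univ] at h2
          exact h2.trans (tsub_le_tsub_left hble 1)
        have h3 : (μ : Measure X) A ≤ ENNReal.ofReal (1 - b) := by
          rw [ENNReal.ofReal_sub 1 hb0.le]
          simpa using h1
        have h4 : ENNReal.ofReal ε < (μ : Measure X) A :=
          lt_of_le_of_lt le_add_self hAgt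
        have := h4.trans_le h3
        rw [ENNReal.ofReal_lt_ofReal_iff_of_nonneg hε0.le] at this
        linarith
      obtain ⟨a, haA, har⟩ := hmeet
      -- ball z s ⊆ thickening ε A
      have hsub : ball z s ⊆ thickening ε A := by
        intro w hw
        rw [mem_thickening_iff]
        refine ⟨a, haA, ?_⟩
        calc dist w a ≤ dist w z + dist z a := dist_triangle _ _ _
          _ < s + r := by
              rw [mem_ball] at hw har
              rw [dist_comm z a]
              exact add_lt_add hw har
          _ < ε := hsr
      -- conclude
      have h5 : (ν : Measure X) (ball z s) ≤ (ν : Measure X) (thickening ε A) :=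
        measure_mono hsub
      have h6 : (ν : Measure X) (thickening ε A) + ENNReal.ofReal ε < 1 :=
        lt_of_lt_of_le hAgt prob_le_one
      -- so ν (thickening ε A) < 1 - ofReal ε ≤ ofReal η
      have h7 : (ν : Measure X) (thickening ε A) ≤ ENNReal.ofReal η := by
        by_contra hcon
        push_neg at hcon
        have : ENNReal.ofReal η + ENNReal.ofReal ε < 1 :=
          lt_of_le_of_lt (add_le_add_left hcon.le _) h6
        rw [← ENNReal.ofReal_add hη.le hε0.le] at this
        have h8 : η + ε < 1 := by
          by_contra hc
          push_neg at hc
          exact absurd this (not_lt.2 (by simpa using ENNReal.one_le_ofReal.2 hc))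
        linarith
      exact h5.trans h7
    -- η arbitrary ⇒ 0
    by_contra hpos
    have hpos' : 0 < (ν : Measure X) (ball z s) := pos_iff_ne_zero.2 hpos
    set η : ℝ := ((ν : Measure X) (ball z s)).toReal / 2 with hη_def
    have hη0 : 0 < η := by
      rw [hη_def]
      have := ENNReal.toReal_pos hpos (measure_ne_top _ _)
      linarith
    have := main η hη0
    have hlt : ENNReal.ofReal η < (ν : Measure X) (ball z s) := by
      rw [hη_def]
      rw [ENNReal.ofReal_lt_iff_lt_toReal (by positivity) (measure_ne_top _ _)]
      have := ENNReal.toReal_pos hpos (measure_ne_top _ _)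
      linarith
    exact absurd this (not_le.2 hlt)
  -- union over s < 1
  have hcover : ball z 1 ⊆ ⋃ n : ℕ, ball z (1 - 1 / (n + 1)) := by
    intro w hw
    rw [mem_ball] at hw
    obtain ⟨n, hn⟩ := exists_nat_one_div_lt (by linarith : (0:ℝ) < 1 - dist w z)
    refine mem_iUnion.2 ⟨n, ?_⟩
    rw [mem_ball]
    linarith
  refine le_antisymm ?_ (zero_le)
  calc (ν : Measure X) (ball z 1) ≤ (ν : Measure X) (⋃ n : ℕ, ball z (1 - 1 / (n + 1))) :=
        measure_mono hcover
    _ = 0 := by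
        refine measure_iUnion_null fun n => key _ ?_
        have : (0:ℝ) < 1 / (n + 1) := by positivity
        linarith

end Dirac

section Support
set_option linter.unusedSectionVars false
variable {X : Type*} [MetricSpace X] [MeasurableSpace X] [OpensMeasurableSpace X]
  [SecondCountableTopology X]

lemma exists_support_point (μ : ProbabilityMeasure X) :
    ∃ z : X, ∀ r : ℝ, 0 < r → 0 < (μ : Measure X) (ball z r) := by
  by_contra hcon
  push_neg at hcon
  choose r hr0 hrz using fun z => hcon z
  have hrz' : ∀ z, (μ : Measure X) (ball z (r z)) = 0 := fun z =>
    le_antisymm (hrz z) (zero_le)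
  set S : Set (Set X) := (fun z => ball z (r z)) '' univ with hS
  obtain ⟨T, hTc, hTS, hTU⟩ := isOpen_sUnion_countable S (by
    rintro s ⟨z, -, rfl⟩; exact isOpen_ball)
  have hUniv : ⋃₀ S = univ := by
    apply eq_univ_of_forall
    intro z
    exact ⟨ball z (r z), ⟨z, mem_univ z, rfl⟩, mem_ball_self (hr0 z)⟩
  have hTnull : (μ : Measure X) (⋃₀ T) = 0 := by
    refine measure_sUnion_null_iff hTc |>.2 fun s hs => ?_
    obtain ⟨z, -, rfl⟩ := hTS hs
    exact hrz' z
  rw [hTU, hUniv, measure_univ] at hTnull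
  exact one_ne_zero hTnull

lemma mem_unitDistSet_dirac_iff {x : X} {ν : ProbabilityMeasure X} :
    ν ∈ unitDistSet {diracPM x} ↔ (ν : Measure X) (ball x 1) = 0 := by
  constructor
  · intro h
    refine ball_zero_of_LPdist_eq_one (μ := diracPM x) (fun r hr => ?_) (h _ rfl)
    rw [diracPM_coe, Measure.dirac_apply_of_mem (mem_ball_self hr)]
    exact one_pos
  · intro h μ' hμ'
    rw [mem_singleton_iff] at hμ'
    subst hμ'
    exact LPdist_dirac_eq_one_of_ball_zero h

end Support

section Banach
set_option linter.unusedSectionVars false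
variable {X : Type*} [NormedAddCommGroup X] [NormedSpace ℝ X]
  [SeparableSpace X] [MeasurableSpace X] [BorelSpace X]

lemma eq_dirac_of_mem_double {x : X} {ν' : ProbabilityMeasure X}
    (h : ν' ∈ unitDistSet (unitDistSet {diracPM x})) : ν' = diracPM x := by
  classical
  haveI : SecondCountableTopology X := UniformSpace.secondCountable_of_separable X
  by_contra hne
  have hH : ∀ ν : ProbabilityMeasure X, (ν : Measure X) (ball x 1) = 0 → LPdist ν ν' = 1 :=
    fun ν hν => h ν (mem_unitDistSet_dirac_iff.2 hν)
  set B : Set X := ball x 1 with hB_def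
  by_cases ha : (ν' : Measure X) Bᶜ = 0
  · -- Case 2 : ν' is concentrated on the open unit ball around x
    have hvex : ∃ v : X, v ≠ 0 := by
      by_contra hv
      push_neg at hv
      refine hne (eq_diracPM_of_singleton ?_)
      have huniv : ({x} : Set X) = univ := eq_univ_of_forall (fun y => by
        simp only [mem_singleton_iff]; rw [hv y, hv x])
      rw [huniv, measure_univ]
    obtain ⟨v, hv⟩ := hvex
    set u₀ : X := ‖v‖⁻¹ • v with hu₀_def
    have hu₀ : ‖u₀‖ = 1 := by
      rw [hu₀_def, norm_smul, norm_inv, norm_norm, inv_mul_cancel₀ (norm_ne_zero_iff.2 hv)]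
    have hrex : ∃ r : ℝ, 0 < r ∧ r < 1 ∧ (ν' : Measure X) (ball x r) < 1 := by
      by_contra hr
      push_neg at hr
      refine hne (eq_diracPM_of_singleton ?_)
      have hball : ∀ n : ℕ, (ν' : Measure X) (ball x (1/(n+2))) = 1 := by
        intro n
        have h1 : (0:ℝ) < 1/(n+2) := by positivity
        have h2 : (1:ℝ)/(n+2) < 1 := by
          rw [div_lt_one (by positivity)]
          have : (0:ℝ) ≤ n := Nat.cast_nonneg n
          linarith
        exact le_antisymm prob_le_one (hr _ h1 h2)
      have hcompl : (ν' : Measure X) {x}ᶜ = 0 := by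
        have hsub : ({x}ᶜ : Set X) ⊆ ⋃ n : ℕ, (ball x (1/(n+2)))ᶜ := by
          intro y hy
          have hdy : 0 < dist y x := dist_pos.2 (by simpa using hy)
          obtain ⟨n, hn⟩ := exists_nat_one_div_lt hdy
          refine mem_iUnion.2 ⟨n, ?_⟩
          simp only [mem_compl_iff, mem_ball, not_lt]
          have : (1:ℝ)/(n+2) ≤ 1/(n+1) := by
            apply div_le_div_of_nonneg_left one_pos.le (by positivity)
            push_cast; linarith
          linarith
        refine le_antisymm ?_ (zero_le)
        calc (ν' : Measure X) {x}ᶜ ≤ (ν' : Measure X) (⋃ n : ℕ, (ball x (1/(n+2)))ᶜ) :=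
              measure_mono hsub
          _ = 0 := by
              refine measure_iUnion_null fun n => ?_
              rw [measure_compl measurableSet_ball (measure_ne_top _ _), measure_univ, hball n,
                tsub_self]
      have := measure_compl (measurableSet_singleton x).compl (measure_ne_top (ν' : Measure X) _)
      rw [compl_compl, measure_univ, hcompl, tsub_zero] at this
      exact this
    obtain ⟨r, hr0, hr1, hclt⟩ := hrex
    set c : ℝ≥0∞ := (ν' : Measure X) (ball x r) with hc_def
    have hcR : c.toReal < 1 := by
      rw [← ENNReal.toReal_one]
      exact ENNReal.toReal_strict_mono ENNReal.one_ne_top hclt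
    have hcR0 : 0 ≤ c.toReal := ENNReal.toReal_nonneg
    -- the radial projection
    set g : X → X := fun y => ‖y - x‖⁻¹ • (y - x) with hg_def
    have hgmeas : Measurable g := by
      apply Measurable.smul
      · exact ((continuous_id.sub continuous_const).norm.measurable).inv
      · exact (continuous_id.sub continuous_const).measurable
    set T : X → X := fun y => x + (if y = x then u₀ else g y) with hT_def
    have hTmeas : Measurable T := by
      apply measurable_const.add
      exact Measurable.ite (measurableSet_eq) measurable_const hgmeas
    have hT1 : ∀ y : X, dist (T y) x = 1 := by
      intro y
      simp only [hT_def]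
      simp only [dist_eq_norm, add_sub_cancel_left]
      by_cases hy : y = x
      · rw [if_pos hy, hu₀]
      · rw [if_neg hy, hg_def]
        have hn0 : ‖y - x‖ ≠ 0 := norm_ne_zero_iff.2 (sub_ne_zero.2 hy)
        simp only [norm_smul, norm_inv, norm_norm]
        exact inv_mul_cancel₀ hn0
    have hTmove : ∀ y : X, y ≠ x → ‖y - x‖ < 1 → dist (T y) y ≤ 1 - ‖y - x‖ := by
      intro y hy hylt
      have hn0 : ‖y - x‖ ≠ 0 := norm_ne_zero_iff.2 (sub_ne_zero.2 hy)
      have hn0' : 0 < ‖y - x‖ := lt_of_le_of_ne (norm_nonneg _) (Ne.symm hn0)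
      have hTy : T y - y = (‖y - x‖⁻¹ - 1) • (y - x) := by
        simp only [hT_def, if_neg hy, hg_def]
        rw [sub_smul, one_smul]
        abel
      rw [dist_eq_norm, hTy, norm_smul, Real.norm_eq_abs]
      have habs : |‖y - x‖⁻¹ - 1| * ‖y - x‖ = |(‖y - x‖⁻¹ - 1) * ‖y - x‖| := by
        rw [abs_mul, abs_of_nonneg (norm_nonneg _)]
      rw [habs, sub_mul, inv_mul_cancel₀ hn0, one_mul, abs_of_nonneg (by linarith)]
    -- the pushforward measure
    set ν : ProbabilityMeasure X :=
      ⟨(ν' : Measure X).map T, Measure.isProbabilityMeasure_map hTmeas.aemeasurable⟩ with hν_def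
    have hνball : (ν : Measure X) B = 0 := by
      show ((ν' : Measure X).map T) B = 0
      rw [Measure.map_apply hTmeas measurableSet_ball]
      have : T ⁻¹' B = ∅ := by
        refine eq_empty_iff_forall_notMem.2 fun y hy => ?_
        rw [mem_preimage, hB_def, mem_ball, hT1 y] at hy
        exact lt_irrefl 1 hy
      rw [this, measure_empty]
    have hd1 := hH ν hνball
    set ε : ℝ := (max (1 - r) c.toReal + 1) / 2 with hε_def
    have hmaxlt : max (1 - r) c.toReal < 1 := max_lt (by linarith) hcR
    have hεlt1 : ε < 1 := by rw [hε_def]; linarith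
    have hεgtmax : max (1 - r) c.toReal < ε := by rw [hε_def]; linarith
    have hε1r : 1 - r < ε := lt_of_le_of_lt (le_max_left _ _) hεgtmax
    have hεc : c.toReal < ε := lt_of_le_of_lt (le_max_right _ _) hεgtmax
    have hε0 : 0 < ε := by
      have h1 : 0 < 1 - r + 1 := by linarith
      have := le_max_left (1 - r) c.toReal
      rw [hε_def]; linarith
    have hmem : ε ∈ LPS ν' ν := by
      refine ⟨hε0, fun A hA => ?_⟩
      set S1 : Set X := A ∩ (ball x r)ᶜ ∩ B with hS1_def
      have hsplit : (ν' : Measure X) A ≤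
          (ν' : Measure X) S1 + ((ν' : Measure X) (ball x r) + (ν' : Measure X) Bᶜ) := by
        calc (ν' : Measure X) A ≤ (ν' : Measure X) (S1 ∪ (ball x r ∪ Bᶜ)) := by
              apply measure_mono
              intro y hy
              by_cases hyr : y ∈ ball x r
              · exact Or.inr (Or.inl hyr)
              · by_cases hyB : y ∈ B
                · exact Or.inl ⟨⟨hy, hyr⟩, hyB⟩
                · exact Or.inr (Or.inr hyB)
          _ ≤ (ν' : Measure X) S1 + (ν' : Measure X) (ball x r ∪ Bᶜ) := measure_union_le _ _
          _ ≤ _ := add_le_add_right (measure_union_le _ _) _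
      have hS1sub : S1 ⊆ T ⁻¹' (thickening ε A) := by
        intro y hy
        obtain ⟨⟨hyA, hyr⟩, hyB⟩ := hy
        have hyx : y ≠ x := by
          intro hyx
          apply hyr
          rw [hyx]
          exact mem_ball_self hr0
        have hylt : ‖y - x‖ < 1 := by rwa [hB_def, mem_ball, dist_eq_norm] at hyB
        have hyge : r ≤ ‖y - x‖ := by
          rw [mem_compl_iff, mem_ball, not_lt, dist_eq_norm] at hyr
          exact hyr
        rw [mem_preimage, mem_thickening_iff]
        refine ⟨y, hyA, ?_⟩
        calc dist (T y) y ≤ 1 - ‖y - x‖ := hTmove y hyx hylt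
          _ ≤ 1 - r := by linarith
          _ < ε := hε1r
      have hS1 : (ν' : Measure X) S1 ≤ (ν : Measure X) (thickening ε A) := by
        calc (ν' : Measure X) S1 ≤ (ν' : Measure X) (T ⁻¹' (thickening ε A)) :=
              measure_mono hS1sub
          _ = (ν : Measure X) (thickening ε A) := by
              show _ = ((ν' : Measure X).map T) _
              rw [Measure.map_apply hTmeas isOpen_thickening.measurableSet]
      have hc_le : c ≤ ENNReal.ofReal ε := by
        have h' := ENNReal.ofReal_le_ofReal hεc.le
        rwa [ENNReal.ofReal_toReal (by rw [hc_def]; exact measure_ne_top _ _)] at h'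
      calc (ν' : Measure X) A ≤
            (ν' : Measure X) S1 + ((ν' : Measure X) (ball x r) + (ν' : Measure X) Bᶜ) := hsplit
        _ = (ν' : Measure X) S1 + c := by rw [ha, add_zero]
        _ ≤ (ν : Measure X) (thickening ε A) + ENNReal.ofReal ε := add_le_add hS1 hc_le
    have : LPdist ν ν' < 1 := by
      rw [LPdist_symm]
      exact lt_of_le_of_lt (LPdist_le_of_mem hmem) hεlt1
    rw [hd1] at this
    exact lt_irrefl 1 this
  · -- Case 1 : ν' has mass outside the unit ball around x
    set a : ℝ≥0∞ := (ν' : Measure X) Bᶜ with ha_def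
    have haT : a ≠ ⊤ := measure_ne_top _ _
    have ha1 : a ≤ 1 := prob_le_one
    have haR : 0 < a.toReal := ENNReal.toReal_pos ha haT
    have haR1 : a.toReal ≤ 1 := by
      rw [← ENNReal.toReal_one]
      exact ENNReal.toReal_mono ENNReal.one_ne_top ha1
    set νm : Measure X := a⁻¹ • (ν' : Measure X).restrict Bᶜ with hνm_def
    have hprob : IsProbabilityMeasure νm := by
      constructor
      rw [hνm_def]
      simp only [Measure.smul_apply, smul_eq_mul, Measure.restrict_apply_univ]
      exact ENNReal.inv_mul_cancel ha haT
    set ν : ProbabilityMeasure X := ⟨νm, hprob⟩ with hν_def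
    have hν0 : (ν : Measure X) B = 0 := by
      show νm B = 0
      rw [hνm_def]
      simp only [Measure.smul_apply, smul_eq_mul,
        Measure.restrict_apply measurableSet_ball]
      rw [Measure.restrict_apply (show MeasurableSet B from measurableSet_ball),
        inter_compl_self, measure_empty, mul_zero]
    have hd1 := hH ν hν0
    set ε : ℝ := 1 - a.toReal / 2 with hε_def
    have hε0 : 0 < ε := by rw [hε_def]; linarith
    have hε1 : ε < 1 := by rw [hε_def]; linarith
    have hmem : ε ∈ LPS ν' ν := by
      refine ⟨hε0, fun A hA => ?_⟩
      have hsplit : (ν' : Measure X) A ≤ (ν' : Measure X) (A ∩ Bᶜ) + (ν' : Measure X) B := by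
        calc (ν' : Measure X) A ≤ (ν' : Measure X) ((A ∩ Bᶜ) ∪ B) := by
              apply measure_mono
              intro y hy
              by_cases hyB : y ∈ B
              · exact Or.inr hyB
              · exact Or.inl ⟨hy, hyB⟩
          _ ≤ _ := measure_union_le _ _
      have h1 : (ν' : Measure X) (A ∩ Bᶜ) = a * (ν : Measure X) (A ∩ Bᶜ) := by
        show _ = a * (νm _)
        rw [hνm_def]
        simp only [Measure.smul_apply, smul_eq_mul,
          Measure.restrict_apply (hA.inter measurableSet_ball.compl)]
        rw [Measure.restrict_apply (hA.inter (show MeasurableSet B from measurableSet_ball).compl),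
          inter_assoc, inter_self, ← mul_assoc, ENNReal.mul_inv_cancel ha haT, one_mul]
      have h2 : (ν' : Measure X) (A ∩ Bᶜ) ≤ (ν : Measure X) (thickening ε A) := by
        rw [h1]
        calc a * (ν : Measure X) (A ∩ Bᶜ) ≤ 1 * (ν : Measure X) (A ∩ Bᶜ) :=
              mul_le_mul_left ha1 _
          _ = (ν : Measure X) (A ∩ Bᶜ) := one_mul _
          _ ≤ (ν : Measure X) (thickening ε A) :=
              measure_mono (inter_subset_left.trans (self_subset_thickening hε0 A))
      have h3 : (ν' : Measure X) B ≤ ENNReal.ofReal ε := by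
        have hBval : (ν' : Measure X) B = 1 - a := by
          have := measure_compl (measurableSet_ball (x := x) (ε := 1)).compl
            (measure_ne_top (ν' : Measure X) _)
          rwa [compl_compl, measure_univ] at this
        rw [hBval]
        rw [tsub_le_iff_right]
        have key : (1:ℝ≥0∞) = ENNReal.ofReal ε + ENNReal.ofReal (1 - ε) := by
          rw [← ENNReal.ofReal_add hε0.le (by linarith), add_sub_cancel, ENNReal.ofReal_one]
        rw [key]
        apply add_le_add_right
        have : ENNReal.ofReal (1 - ε) ≤ ENNReal.ofReal a.toReal :=
          ENNReal.ofReal_le_ofReal (by rw [hε_def]; linarith)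
        rwa [ENNReal.ofReal_toReal haT] at this
      calc (ν' : Measure X) A ≤ (ν' : Measure X) (A ∩ Bᶜ) + (ν' : Measure X) B := hsplit
        _ ≤ (ν : Measure X) (thickening ε A) + ENNReal.ofReal ε := add_le_add h2 h3
    have : LPdist ν ν' < 1 := by
      rw [LPdist_symm]
      exact lt_of_le_of_lt (LPdist_le_of_mem hmem) hε1
    rw [hd1] at this
    exact lt_irrefl 1 this

/-- Metric characterisation of Dirac measures. -/
lemma double_unitDistSet_subset_iff (μ : ProbabilityMeasure X) :
    unitDistSet (unitDistSet {μ}) ⊆ {μ} ↔ ∃ x : X, μ = diracPM x := by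
  haveI : SecondCountableTopology X := UniformSpace.secondCountable_of_separable X
  constructor
  · intro h
    obtain ⟨z, hz⟩ := exists_support_point μ
    by_contra hcon
    push_neg at hcon
    have hmem : diracPM z ∈ unitDistSet (unitDistSet {μ}) := by
      intro ν hν
      have h1 : LPdist μ ν = 1 := hν μ rfl
      have h2 := ball_zero_of_LPdist_eq_one hz h1
      rw [LPdist_symm]
      exact LPdist_dirac_eq_one_of_ball_zero h2
    exact hcon z ((mem_singleton_iff.1 (h hmem)).symm)
  · rintro ⟨x, rfl⟩
    intro ν' hν'
    exact mem_singleton_iff.2 (eq_dirac_of_mem_double hν')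

end Banach

section Metric2
set_option linter.unusedSectionVars false
variable {X : Type*} [MetricSpace X] [MeasurableSpace X] [OpensMeasurableSpace X]

lemma LPdist_self (μ : ProbabilityMeasure X) : LPdist μ μ = 0 := by
  have hset : LPS μ μ = Ioi (0:ℝ) := by
    ext ε
    constructor
    · exact fun h => h.1
    · intro hε
      exact ⟨hε, fun A hA => le_add_right (measure_mono (self_subset_thickening hε A))⟩
  rw [LPdist_eq_sInf, hset, csInf_Ioi]

lemma LPdist_dirac_dirac (x y : X) :
    LPdist (diracPM x) (diracPM y) = min (dist x y) 1 := by
  have hcrit : ∀ ε : ℝ, 0 < ε →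
      (ε ∈ LPS (diracPM x) (diracPM y) ↔ (dist y x < ε ∨ 1 ≤ ε)) := by
    intro ε hε
    rw [mem_LPS_dirac_iff hε, diracPM_coe, Measure.dirac_apply]
    by_cases hyx : y ∈ ball x ε
    · simp only [indicator_of_mem hyx]
      constructor
      · intro _
        exact Or.inl (by rwa [mem_ball] at hyx)
      · intro _
        exact le_add_right le_rfl
    · simp only [indicator_of_notMem hyx, zero_add, ENNReal.one_le_ofReal]
      rw [mem_ball] at hyx
      push_neg at hyx
      constructor
      · exact fun h => Or.inr h
      · rintro (h | h)
        · exact absurd h (not_lt.2 hyx)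
        · exact h
  rcases lt_or_ge (dist x y) 1 with hd | hd
  · have hset : LPS (diracPM x) (diracPM y) = Ioi (dist x y) := by
      ext ε
      constructor
      · intro h
        rcases (hcrit ε h.1).1 h with h' | h'
        · exact mem_Ioi.2 ((dist_comm x y).trans_lt h')
        · exact mem_Ioi.2 (lt_of_lt_of_le hd h')
      · intro hε
        rw [mem_Ioi] at hε
        have hε0 : 0 < ε := lt_of_le_of_lt dist_nonneg hε
        exact (hcrit ε hε0).2 (Or.inl (by rwa [dist_comm]))
    rw [LPdist_eq_sInf, hset, csInf_Ioi, min_eq_left hd.le]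
  · have hset : LPS (diracPM x) (diracPM y) = Ici (1:ℝ) := by
      ext ε
      constructor
      · intro h
        rcases (hcrit ε h.1).1 h with h' | h'
        · rw [dist_comm] at h'
          exact mem_Ici.2 (le_of_lt (lt_of_le_of_lt hd h'))
        · exact h'
      · intro hε
        rw [mem_Ici] at hε
        exact (hcrit ε (lt_of_lt_of_le one_pos hε)).2 (Or.inr hε)
    rw [LPdist_eq_sInf, hset, csInf_Ici, min_eq_right hd]

end Metric2

section Sep
set_option linter.unusedSectionVars false
variable {X : Type*} [MetricSpace X] [MeasurableSpace X] [BorelSpace X]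

lemma measure_le_of_LPdist_eq_zero {μ ν : ProbabilityMeasure X} (h : LPdist μ ν = 0)
    {A : Set X} (hA : IsClosed A) : (μ : Measure X) A ≤ (ν : Measure X) A := by
  have hev : ∀ ε : ℝ, 0 < ε →
      (μ : Measure X) A ≤ (ν : Measure X) (thickening ε A) + ENNReal.ofReal ε := by
    intro ε hε
    have : LPdist μ ν < ε := by rw [h]; exact hε
    exact (mem_LPS_of_LPdist_lt this).2 A hA.measurableSet
  have htendsto : Filter.Tendsto
      (fun ε : ℝ => (ν : Measure X) (thickening ε A) + ENNReal.ofReal ε)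
      (nhdsWithin 0 (Ioi 0)) (nhds ((ν : Measure X) A + 0)) := by
    apply Filter.Tendsto.add
    · exact tendsto_measure_thickening_of_isClosed
        ⟨1, one_pos, measure_ne_top _ _⟩ hA
    · have h1 : Filter.Tendsto ENNReal.ofReal (nhds 0) (nhds (ENNReal.ofReal 0)) :=
        ENNReal.continuous_ofReal.tendsto 0
      rw [ENNReal.ofReal_zero] at h1
      exact h1.mono_left nhdsWithin_le_nhds
  rw [add_zero] at htendsto
  refine ge_of_tendsto htendsto ?_
  filter_upwards [self_mem_nhdsWithin] with ε hε
  exact hev ε hε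

lemma eq_of_LPdist_eq_zero {μ ν : ProbabilityMeasure X} (h : LPdist μ ν = 0) : μ = ν := by
  have h' : LPdist ν μ = 0 := by rwa [LPdist_symm] at h
  apply ProbabilityMeasure.toMeasure_injective
  refine ext_of_generate_finite {s : Set X | IsClosed s} ?_ ?_ ?_ ?_
  · rw [BorelSpace.measurable_eq (α := X), borel_eq_generateFrom_isClosed]
  · exact fun s hs t ht _ => hs.inter ht
  · intro s hs
    exact le_antisymm (measure_le_of_LPdist_eq_zero h hs)
      (measure_le_of_LPdist_eq_zero h' hs)
  · rw [measure_univ, measure_univ]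

end Sep

section Chain
variable {X : Type*} [NormedAddCommGroup X] [NormedSpace ℝ X]

lemma lipschitz_of_min_dist (f : X → X)
    (hf : ∀ x y : X, min (dist (f x) (f y)) 1 = min (dist x y) 1) :
    ∀ x y : X, dist (f x) (f y) ≤ dist x y := by
  have hsmall : ∀ x y : X, dist x y < 1 → dist (f x) (f y) = dist x y := by
    intro x y hd
    have h := hf x y
    rw [min_eq_left hd.le] at h
    rcases lt_or_ge (dist (f x) (f y)) 1 with h1 | h1
    · rwa [min_eq_left h1.le] at h
    · rw [min_eq_right h1] at h
      linarith
  intro x y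
  rcases eq_or_ne x y with rfl | hxy
  · simp
  obtain ⟨n, hn⟩ := exists_nat_gt (dist x y)
  have hd0 : 0 < dist x y := dist_pos.2 hxy
  have hn0 : 0 < (n:ℝ) := lt_trans hd0 hn
  set p : ℕ → X := fun i => x + ((i:ℝ)/n) • (y - x) with hp
  have hstep : ∀ i : ℕ, dist (p i) (p (i+1)) = dist x y / n := by
    intro i
    simp only [hp]
    rw [dist_add_left, dist_eq_norm, ← sub_smul, norm_smul, Real.norm_eq_abs]
    rw [show ((i:ℝ)/n - ((i+1:ℕ):ℝ)/n) = -(1/n) by push_cast; ring]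
    rw [abs_neg, abs_of_nonneg (by positivity)]
    rw [← dist_eq_norm, dist_comm y x]
    ring
  have hlt : dist x y / n < 1 := by rw [div_lt_one hn0]; exact hn
  have hstep' : ∀ i : ℕ, dist (f (p i)) (f (p (i+1))) = dist x y / n := by
    intro i
    rw [hsmall _ _ (by rw [hstep i]; exact hlt), hstep i]
  have hp0 : p 0 = x := by simp [hp]
  have hpn : p n = y := by
    simp only [hp, div_self hn0.ne']
    rw [one_smul]
    abel
  calc dist (f x) (f y) = dist (f (p 0)) (f (p n)) := by rw [hp0, hpn]
    _ ≤ ∑ i ∈ Finset.range n, dist (f (p i)) (f (p (i+1))) :=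
        dist_le_range_sum_dist (fun i => f (p i)) n
    _ = ∑ _i ∈ Finset.range n, (dist x y / n) := Finset.sum_congr rfl fun i _ => hstep' i
    _ = n * (dist x y / n) := by rw [Finset.sum_const, Finset.card_range, nsmul_eq_mul]
    _ = dist x y := by field_simp

end Chain

/-- Lemma 2.3: a surjective Lévy–Prokhorov isometry acts on the Dirac measures as a
surjective affine isometry of the underlying Banach space. -/
theorem dirac_action {X : Type*} [NormedAddCommGroup X] [NormedSpace ℝ X]
    [CompleteSpace X] [SeparableSpace X] [MeasurableSpace X] [BorelSpace X]
    (φ : ProbabilityMeasure X → ProbabilityMeasure X)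
    (hsurj : Function.Surjective φ)
    (hiso : ∀ μ ν : ProbabilityMeasure X, LPdist (φ μ) (φ ν) = LPdist μ ν) :
    ∃ ψ : X ≃ᵃⁱ[ℝ] X, ∀ x : X, φ (diracPM x) = diracPM (ψ x) := by
  have hinj : Function.Injective φ := by
    intro μ ν h
    apply eq_of_LPdist_eq_zero
    rw [← hiso, h, LPdist_self]
  have htrans : ∀ 𝒜 : Set (ProbabilityMeasure X),
      unitDistSet (φ '' 𝒜) = φ '' unitDistSet 𝒜 := by
    intro 𝒜
    ext ν
    constructor
    · intro hν
      obtain ⟨ν₀, rfl⟩ := hsurj ν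
      exact ⟨ν₀, fun μ hμ => by have := hν (φ μ) ⟨μ, hμ, rfl⟩; rwa [hiso] at this, rfl⟩
    · rintro ⟨ν₀, hν₀, rfl⟩ μ hμ
      obtain ⟨μ₀, hμ₀, rfl⟩ := hμ
      rw [hiso]
      exact hν₀ μ₀ hμ₀
  have hDir : ∀ μ : ProbabilityMeasure X, (∃ x, μ = diracPM x) → ∃ y, φ μ = diracPM y := by
    intro μ hμ
    apply (double_unitDistSet_subset_iff (φ μ)).1
    intro ν hν
    rw [show ({φ μ} : Set (ProbabilityMeasure X)) = φ '' {μ} from (image_singleton).symm,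
      htrans, htrans] at hν
    obtain ⟨ν₀, hν₀, rfl⟩ := hν
    have h2 := (double_unitDistSet_subset_iff μ).2 hμ hν₀
    rw [mem_singleton_iff] at h2 ⊢
    rw [h2]
  have hDir' : ∀ μ : ProbabilityMeasure X, (∃ y, φ μ = diracPM y) → ∃ x, μ = diracPM x := by
    intro μ hμ
    apply (double_unitDistSet_subset_iff μ).1
    intro ν hν
    have hν' : φ ν ∈ unitDistSet (unitDistSet {φ μ}) := by
      rw [show ({φ μ} : Set (ProbabilityMeasure X)) = φ '' {μ} from (image_singleton).symm,
        htrans, htrans]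
      exact ⟨ν, hν, rfl⟩
    have h2 := (double_unitDistSet_subset_iff (φ μ)).2 hμ hν'
    rw [mem_singleton_iff] at h2 ⊢
    exact hinj h2
  choose ψ₀ hψ₀ using fun x : X => hDir (diracPM x) ⟨x, rfl⟩
  have hmin : ∀ x y : X, min (dist (ψ₀ x) (ψ₀ y)) 1 = min (dist x y) 1 := by
    intro x y
    rw [← LPdist_dirac_dirac, ← hψ₀, ← hψ₀, hiso, LPdist_dirac_dirac]
  have hψinj : Function.Injective ψ₀ := by
    intro x y h
    apply diracPM_inj (hinj ?_)
    rw [hψ₀, hψ₀, h]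
  have hψsurj : Function.Surjective ψ₀ := by
    intro y
    obtain ⟨μ, hμ⟩ := hsurj (diracPM y)
    obtain ⟨x, rfl⟩ := hDir' μ ⟨y, hμ⟩
    refine ⟨x, diracPM_inj ?_⟩
    rw [← hψ₀, hμ]
  set e : X ≃ X := Equiv.ofBijective ψ₀ ⟨hψinj, hψsurj⟩ with he
  have hEx : ∀ x : X, e x = ψ₀ x := fun _ => rfl
  have hmin' : ∀ x y : X, min (dist (e.symm x) (e.symm y)) 1 = min (dist x y) 1 := by
    intro x y
    have h := hmin (e.symm x) (e.symm y)
    have h1 : ψ₀ (e.symm x) = x := by rw [← hEx]; exact e.apply_symm_apply x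
    have h2 : ψ₀ (e.symm y) = y := by rw [← hEx]; exact e.apply_symm_apply y
    rw [h1, h2] at h
    exact h.symm
  have hisom : ∀ x y : X, dist (ψ₀ x) (ψ₀ y) = dist x y := by
    intro x y
    refine le_antisymm (lipschitz_of_min_dist ψ₀ hmin x y) ?_
    have h := lipschitz_of_min_dist e.symm hmin' (ψ₀ x) (ψ₀ y)
    have h1 : e.symm (ψ₀ x) = x := by rw [← hEx]; exact e.symm_apply_apply x
    have h2 : e.symm (ψ₀ y) = y := by rw [← hEx]; exact e.symm_apply_apply y
    rwa [h1, h2] at h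
  set eiso : X ≃ᵢ X := ⟨e, Isometry.of_dist_eq fun a b => hisom a b⟩ with heiso
  refine ⟨eiso.toRealAffineIsometryEquiv, fun x => ?_⟩
  have hcoe : eiso.toRealAffineIsometryEquiv x = ψ₀ x := by
    rw [IsometryEquiv.coeFn_toRealAffineIsometryEquiv]
    exact hEx x
  rw [hcoe]
  exact hψ₀ x
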